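/- For the pair of Gaussian distributions N(0,1) and N(μ,1) with μ > 0, the privacy loss log(p_{N(μ,1)}(x)/p_{N(0,1)}(x)) = μx − μ²/2, and the supremum over measurable sets S of P_{N(μ,1)}(S) − e^ε P_{N(0,1)}(S) equals Φ(−ε/μ + μ/2) − e^ε Φ(−ε/μ − μ/2). -/

import Mathlib

open Real MeasureTheory ProbabilityTheory

noncomputable def Phi (x : ℝ) : ℝ := ((gaussianReal 0 1) (Set.Iic x)).toReal

lemma gauss_key (μ x : ℝ) :
    gaussianPDFReal μ 1 x = exp (μ * x - μ ^ 2 / 2) * gaussianPDFReal 0 1 x := by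
  simp only [gaussianPDFReal, NNReal.coe_one, mul_one, sub_zero]
  have h : -(x - μ) ^ 2 / (2:ℝ) = (μ * x - μ ^ 2 / 2) + (-x ^ 2 / 2) := by ring
  rw [h, Real.exp_add]; ring

lemma gauss_Ioi (m c : ℝ) : ((gaussianReal m 1) (Set.Ioi c)).toReal = Phi (m - c) := by
  haveI : NullSingletonClass (gaussianReal 0 1) :=
    ⟨fun x => (gaussianReal_absolutelyContinuous 0 one_ne_zero) (measure_singleton x)⟩
  have h1 : (gaussianReal 0 1).map (fun x : ℝ => (-1) * x) = gaussianReal 0 1 := by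
    rw [gaussianReal_map_const_mul]
    norm_num
  have hmap : (gaussianReal 0 1).map (fun x : ℝ => -x + m) = gaussianReal m 1 := by
    rw [show (fun x : ℝ => -x + m) = (· + m) ∘ (fun x : ℝ => (-1) * x) by funext x; simp,
      ← Measure.map_map (by fun_prop) (by fun_prop), h1, gaussianReal_map_add_const, zero_add]
  rw [← hmap, Measure.map_apply (by fun_prop) measurableSet_Ioi]
  have hpre : (fun x : ℝ => -x + m) ⁻¹' Set.Ioi c = Set.Iio (m - c) := by
    ext x
    simp only [Set.mem_preimage, Set.mem_Ioi, Set.mem_Iio]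
    constructor <;> intro h <;> linarith
  rw [hpre, measure_congr (Iio_ae_eq_Iic)]
  rfl

/-- For `N(0,1)` vs `N(μ,1)` with `μ > 0`: the privacy loss is
`log(p_{N(μ,1)}(x)/p_{N(0,1)}(x)) = μx − μ²/2`, and the supremum over measurable
sets `S` of `P_{N(μ,1)}(S) − e^ε P_{N(0,1)}(S)` equals
`Φ(−ε/μ + μ/2) − e^ε Φ(−ε/μ − μ/2)` (and is attained). -/
theorem gaussian_privacy_loss_and_sup (μ : ℝ) (hμ : 0 < μ) (ε : ℝ) (hε : 0 ≤ ε) :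
    (∀ x : ℝ, Real.log (gaussianPDFReal μ 1 x / gaussianPDFReal 0 1 x)
        = μ * x - μ ^ 2 / 2) ∧
    IsGreatest
      {d : ℝ | ∃ S : Set ℝ, MeasurableSet S ∧
        d = ((gaussianReal μ 1) S).toReal - exp ε * ((gaussianReal 0 1) S).toReal}
      (Phi (-ε / μ + μ / 2) - exp ε * Phi (-ε / μ - μ / 2)) := by
  set c : ℝ := ε / μ + μ / 2 with hcdef
  set f : ℝ → ℝ := fun x => gaussianPDFReal μ 1 x - exp ε * gaussianPDFReal 0 1 x with hfdef
  have hf_int : Integrable f :=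
    (integrable_gaussianPDFReal μ 1).sub ((integrable_gaussianPDFReal 0 1).const_mul (exp ε))
  have hd : ∀ S : Set ℝ, MeasurableSet S →
      ((gaussianReal μ 1) S).toReal - exp ε * ((gaussianReal 0 1) S).toReal
        = ∫ x in S, f x := by
    intro S hS
    rw [gaussianReal_apply_eq_integral μ one_ne_zero S,
      gaussianReal_apply_eq_integral 0 one_ne_zero S,
      ENNReal.toReal_ofReal (integral_nonneg fun x => gaussianPDFReal_nonneg _ _ _),
      ENNReal.toReal_ofReal (integral_nonneg fun x => gaussianPDFReal_nonneg _ _ _), hfdef]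
    rw [integral_sub (integrable_gaussianPDFReal μ 1).integrableOn
      (((integrable_gaussianPDFReal 0 1).const_mul (exp ε)).integrableOn),
      integral_const_mul]
  have hμc : μ * c = ε + μ ^ 2 / 2 := by rw [hcdef]; field_simp
  clear_value c
  have hpos : ∀ x : ℝ, c ≤ x → 0 ≤ f x := by
    intro x hx
    have ht : ε ≤ μ * x - μ ^ 2 / 2 := by
      linarith [mul_nonneg hμ.le (sub_nonneg.2 hx), mul_sub μ x c]
    simp only [hfdef, gauss_key μ x]
    have := gaussianPDFReal_nonneg 0 1 x
    nlinarith [exp_le_exp.2 ht]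
  have hneg : ∀ x : ℝ, x ≤ c → f x ≤ 0 := by
    intro x hx
    have ht : μ * x - μ ^ 2 / 2 ≤ ε := by
      linarith [mul_nonneg hμ.le (sub_nonneg.2 hx), mul_sub μ c x]
    simp only [hfdef, gauss_key μ x]
    have := gaussianPDFReal_nonneg 0 1 x
    nlinarith [exp_le_exp.2 ht]
  have h1 : Phi (-ε / μ + μ / 2) = ((gaussianReal μ 1) (Set.Ioi c)).toReal := by
    rw [show -ε / μ + μ / 2 = μ - c by rw [hcdef]; ring]
    exact (gauss_Ioi μ c).symm
  have h2 : Phi (-ε / μ - μ / 2) = ((gaussianReal 0 1) (Set.Ioi c)).toReal := by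
    rw [show -ε / μ - μ / 2 = 0 - c by rw [hcdef]; ring]
    exact (gauss_Ioi 0 c).symm
  refine ⟨fun x => ?_, ⟨Set.Ioi c, measurableSet_Ioi, by rw [h1, h2]⟩, ?_⟩
  · rw [gauss_key μ x, mul_div_assoc,
      div_self (ne_of_gt (gaussianPDFReal_pos 0 1 x one_ne_zero)), mul_one, Real.log_exp]
  · rintro d ⟨S, hS, rfl⟩
    rw [hd S hS, h1, h2, hd (Set.Ioi c) measurableSet_Ioi]
    calc ∫ x in S, f x
        = (∫ x in S ∩ Set.Ioi c, f x) + ∫ x in S \ Set.Ioi c, f x :=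
          (integral_inter_add_diff measurableSet_Ioi hf_int.integrableOn).symm
      _ ≤ ∫ x in S ∩ Set.Ioi c, f x := by
          have : ∫ x in S \ Set.Ioi c, f x ≤ 0 :=
            setIntegral_nonpos (hS.diff measurableSet_Ioi)
              (fun x hx => hneg x (le_of_not_gt hx.2))
          linarith
      _ ≤ ∫ x in Set.Ioi c, f x :=
          setIntegral_mono_set hf_int.integrableOn
            ((ae_restrict_iff' measurableSet_Ioi).2 (ae_of_all _ fun x hx => hpos x hx.le))
            (HasSubset.Subset.eventuallyLE Set.inter_subset_right)
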